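/- Let d = 1, λ ∈ (0,1) with λ ≠ 1/2, d_λ > 0, Δx > 0, and let i ∈ ℤ with |i| ≥ 2. Then the finite-volume weight satisfies G_{0,i} = − (d_λ Δx^{1−2λ}) / (2λ(1−2λ)) · ( 2|i|^{1−2λ} − (|i|−1)^{1−2λ} − (|i|+1)^{1−2λ} ). -/

import Mathlib

open MeasureTheory

/-- The 1-d Lévy-type measure `μ_λ` with density `d_λ |z|^(-(1+2λ))` w.r.t. Lebesgue measure. -/
noncomputable def fracMeasure1 (lam dl : ℝ) : Measure ℝ :=
  volume.withDensity (fun z => ENNReal.ofReal (dl * |z| ^ (-(1 + 2 * lam))))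

/-- The 1-d spatial grid cell `R_i = [iΔx - Δx/2, iΔx + Δx/2)`. -/
def cell1 (dx : ℝ) (i : ℤ) : Set ℝ :=
  Set.Ico ((i : ℝ) * dx - dx / 2) ((i : ℝ) * dx + dx / 2)

/-- The 1-d finite-volume weight
`G_{α,β} = ∫_{R_α} ∫_{|z| > Δx/2} (1_{R_β}(x) - 1_{R_β}(x+z)) dμ_λ(z) dx`. -/
noncomputable def weight1 (lam dl dx : ℝ) (a b : ℤ) : ℝ :=
  ∫ x in cell1 dx a,
    ∫ z in {z : ℝ | dx / 2 < |z|},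
      ((cell1 dx b).indicator (fun _ => (1 : ℝ)) x
        - (cell1 dx b).indicator (fun _ => (1 : ℝ)) (x + z)) ∂(fracMeasure1 lam dl)

lemma intgOn (dl lam c d : ℝ) (h : ∀ x ∈ Set.Icc c d, x ≠ 0) :
    MeasureTheory.IntegrableOn (fun z : ℝ => dl * |z| ^ (-(1 + 2 * lam))) (Set.Ico c d) := by
  apply MeasureTheory.IntegrableOn.mono_set _ Set.Ico_subset_Icc_self
  apply ContinuousOn.integrableOn_Icc
  exact continuousOn_const.mul ((continuous_abs.continuousOn).rpow_const
    (fun x hx => Or.inl (abs_ne_zero.mpr (h x hx))))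

lemma absInt (dl lam c d : ℝ) (hlam : 0 < lam) (hc : 0 < c) (hcd : c ≤ d) :
    ∫ z in Set.Ico c d, dl * |z| ^ (-(1 + 2 * lam)) =
      dl / (2 * lam) * (c ^ (-(2 * lam)) - d ^ (-(2 * lam))) := by
  rw [Measure.restrict_congr_set Ico_ae_eq_Ioc, ← intervalIntegral.integral_of_le hcd]
  have heq : Set.EqOn (fun z : ℝ => dl * |z| ^ (-(1 + 2 * lam)))
      (fun z : ℝ => dl * z ^ (-(1 + 2 * lam))) (Set.uIcc c d) := by
    intro z hz
    rw [Set.uIcc_of_le hcd] at hz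
    simp only
    rw [abs_of_pos (lt_of_lt_of_le hc hz.1)]
  rw [intervalIntegral.integral_congr heq, intervalIntegral.integral_const_mul,
    integral_rpow (Or.inr ⟨by intro h; nlinarith, Set.notMem_uIcc_of_lt hc (hc.trans_le hcd)⟩)]
  have he : -(1 + 2 * lam) + 1 = -(2 * lam) := by ring
  rw [he]
  have h2l : (2 : ℝ) * lam ≠ 0 := by positivity
  field_simp
  ring

lemma absIntNeg (dl lam c d : ℝ) (hlam : 0 < lam) (hc : 0 < c) (hcd : c ≤ d) :
    ∫ z in Set.Ico (-d) (-c), dl * |z| ^ (-(1 + 2 * lam)) =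
      dl / (2 * lam) * (c ^ (-(2 * lam)) - d ^ (-(2 * lam))) := by
  rw [Measure.restrict_congr_set Ico_ae_eq_Ioc,
    ← intervalIntegral.integral_of_le (by linarith : -d ≤ -c)]
  have : (∫ z in (-d)..(-c), dl * |z| ^ (-(1 + 2 * lam)))
      = ∫ z in (-d)..(-c), (fun y : ℝ => dl * |y| ^ (-(1 + 2 * lam))) (-z) := by
    apply intervalIntegral.integral_congr
    intro z _
    simp only [abs_neg]
  rw [this, intervalIntegral.integral_comp_neg (fun y : ℝ => dl * |y| ^ (-(1 + 2 * lam))),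
    neg_neg, neg_neg, intervalIntegral.integral_of_le hcd,
    ← Measure.restrict_congr_set Ico_ae_eq_Ioc]
  exact absInt dl lam c d hlam hc hcd

lemma inner_val (lam dl dx : ℝ) (hdl : 0 ≤ dl) (i : ℤ) (x : ℝ)
    (hsub : Set.Ico ((i : ℝ) * dx - dx / 2 - x) ((i : ℝ) * dx + dx / 2 - x)
      ⊆ {z : ℝ | dx / 2 < |z|})
    (hx : x ∉ cell1 dx i)
    (hint : MeasureTheory.IntegrableOn (fun z : ℝ => dl * |z| ^ (-(1 + 2 * lam)))
      (Set.Ico ((i : ℝ) * dx - dx / 2 - x) ((i : ℝ) * dx + dx / 2 - x))) :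
    (∫ z in {z : ℝ | dx / 2 < |z|},
      ((cell1 dx i).indicator (fun _ => (1 : ℝ)) x
        - (cell1 dx i).indicator (fun _ => (1 : ℝ)) (x + z)) ∂(fracMeasure1 lam dl))
    = -∫ z in Set.Ico ((i : ℝ) * dx - dx / 2 - x) ((i : ℝ) * dx + dx / 2 - x),
        dl * |z| ^ (-(1 + 2 * lam)) := by
  set T : Set ℝ := Set.Ico ((i : ℝ) * dx - dx / 2 - x) ((i : ℝ) * dx + dx / 2 - x) with hT
  have h1 : ∀ z : ℝ, ((cell1 dx i).indicator (fun _ => (1 : ℝ)) x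
      - (cell1 dx i).indicator (fun _ => (1 : ℝ)) (x + z))
      = -(T.indicator (fun _ => (1 : ℝ)) z) := by
    intro z
    rw [Set.indicator_of_notMem hx]
    have hiff : x + z ∈ cell1 dx i ↔ z ∈ T := by
      simp only [cell1, Set.mem_Ico, hT]
      constructor <;> intro h <;> exact ⟨by linarith [h.1], by linarith [h.2]⟩
    by_cases hz : z ∈ T
    · rw [Set.indicator_of_mem hz, Set.indicator_of_mem (hiff.mpr hz)]; ring
    · rw [Set.indicator_of_notMem hz, Set.indicator_of_notMem (fun hm => hz (hiff.mp hm))]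
      ring
  simp_rw [h1]
  rw [integral_neg]
  congr 1
  rw [setIntegral_indicator measurableSet_Ico, Set.inter_eq_self_of_subset_right hsub,
    setIntegral_const, smul_eq_mul, mul_one]
  have hTm : MeasurableSet T := measurableSet_Ico
  rw [measureReal_def, fracMeasure1, withDensity_apply _ hTm,
    ← ofReal_integral_eq_lintegral_ofReal hint
      (Filter.Eventually.of_forall fun z => mul_nonneg hdl (Real.rpow_nonneg (abs_nonneg z) _)),
    ENNReal.toReal_ofReal
      (integral_nonneg fun z => mul_nonneg hdl (Real.rpow_nonneg (abs_nonneg z) _))]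

theorem stmt19 (lam dl dx : ℝ) (hlam : lam ∈ Set.Ioo (0 : ℝ) 1)
    (hlam2 : lam ≠ 1 / 2) (hdl : 0 < dl) (hdx : 0 < dx)
    (i : ℤ) (hi : 2 ≤ |i|) :
    weight1 lam dl dx 0 i
      = -(dl * dx ^ (1 - 2 * lam)) / (2 * lam * (1 - 2 * lam))
        * (2 * |(i : ℝ)| ^ (1 - 2 * lam)
          - (|(i : ℝ)| - 1) ^ (1 - 2 * lam)
          - (|(i : ℝ)| + 1) ^ (1 - 2 * lam)) := by
  have hl0 : 0 < lam := hlam.1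
  have h2l : (2 : ℝ) * lam ≠ 0 := by positivity
  have hs : (1 : ℝ) - 2 * lam ≠ 0 := by
    intro h; apply hlam2; linarith
  have hqne : -(2 * lam) ≠ -1 := by intro h; apply hlam2; linarith
  have hq1 : -(2 * lam) + 1 = 1 - 2 * lam := by ring
  have hc0 : cell1 dx 0 = Set.Ico (-(dx / 2)) (dx / 2) := by
    simp [cell1]
  unfold weight1
  rw [hc0]
  rcases le_or_gt 0 i with hpos | hneg
  · -- positive case : 2 ≤ i
    have hi2 : (2 : ℝ) ≤ (i : ℝ) := by
      have : (2 : ℤ) ≤ i := by rwa [abs_of_nonneg hpos] at hi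
      exact_mod_cast this
    have habs : |(i : ℝ)| = (i : ℝ) := abs_of_nonneg (by linarith)
    have hidx : 2 * dx ≤ (i : ℝ) * dx := by nlinarith
    have hfun : Set.EqOn
        (fun x => ∫ z in {z : ℝ | dx / 2 < |z|},
          ((cell1 dx i).indicator (fun _ => (1 : ℝ)) x
            - (cell1 dx i).indicator (fun _ => (1 : ℝ)) (x + z)) ∂(fracMeasure1 lam dl))
        (fun x => -(dl / (2 * lam) * (((i : ℝ) * dx - dx / 2 - x) ^ (-(2 * lam))
          - ((i : ℝ) * dx + dx / 2 - x) ^ (-(2 * lam)))))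
        (Set.Ico (-(dx / 2)) (dx / 2)) := by
      intro x hx
      obtain ⟨hx1, hx2⟩ := hx
      beta_reduce
      have hcpos : 0 < (i : ℝ) * dx - dx / 2 - x := by linarith
      have hcd : (i : ℝ) * dx - dx / 2 - x ≤ (i : ℝ) * dx + dx / 2 - x := by linarith
      rw [inner_val lam dl dx hdl.le i x
          (fun z hz => by
            have h1 := hz.1
            simp only [Set.mem_setOf_eq]
            rw [abs_of_pos (by linarith)]
            linarith)
          (by
            simp only [cell1, Set.mem_Ico, not_and, not_lt]
            intro h; linarith)
          (intgOn dl lam _ _ (fun y hy => by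
            have := hy.1; intro h0; rw [h0] at this; linarith)),
        absInt dl lam _ _ hl0 hcpos hcd]
    rw [setIntegral_congr_fun measurableSet_Ico hfun]
    rw [Measure.restrict_congr_set Ico_ae_eq_Ioc,
      ← intervalIntegral.integral_of_le (by linarith : -(dx / 2) ≤ dx / 2)]
    have hcont1 : IntervalIntegrable
        (fun x : ℝ => ((i : ℝ) * dx - dx / 2 - x) ^ (-(2 * lam))) volume (-(dx / 2)) (dx / 2) := by
      apply ContinuousOn.intervalIntegrable
      apply ContinuousOn.rpow_const (by fun_prop)
      intro x hx
      rw [Set.uIcc_of_le (by linarith : -(dx / 2) ≤ dx / 2)] at hx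
      exact Or.inl (by nlinarith [hx.2])
    have hcont2 : IntervalIntegrable
        (fun x : ℝ => ((i : ℝ) * dx + dx / 2 - x) ^ (-(2 * lam))) volume (-(dx / 2)) (dx / 2) := by
      apply ContinuousOn.intervalIntegrable
      apply ContinuousOn.rpow_const (by fun_prop)
      intro x hx
      rw [Set.uIcc_of_le (by linarith : -(dx / 2) ≤ dx / 2)] at hx
      exact Or.inl (by nlinarith [hx.2])
    rw [intervalIntegral.integral_neg, intervalIntegral.integral_const_mul,
      intervalIntegral.integral_sub hcont1 hcont2]
    have e1 : (∫ x in (-(dx / 2))..(dx / 2), ((i : ℝ) * dx - dx / 2 - x) ^ (-(2 * lam)))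
        = (((i : ℝ) * dx) ^ (1 - 2 * lam) - (((i : ℝ) - 1) * dx) ^ (1 - 2 * lam))
          / (1 - 2 * lam) := by
      rw [intervalIntegral.integral_comp_sub_left (fun y : ℝ => y ^ (-(2 * lam)))
        ((i : ℝ) * dx - dx / 2)]
      rw [integral_rpow (Or.inr ⟨hqne, Set.notMem_uIcc_of_lt (by nlinarith) (by nlinarith)⟩)]
      rw [hq1, show (i : ℝ) * dx - dx / 2 - dx / 2 = ((i : ℝ) - 1) * dx from by ring,
        show (i : ℝ) * dx - dx / 2 - -(dx / 2) = (i : ℝ) * dx from by ring]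
    have e2 : (∫ x in (-(dx / 2))..(dx / 2), ((i : ℝ) * dx + dx / 2 - x) ^ (-(2 * lam)))
        = ((((i : ℝ) + 1) * dx) ^ (1 - 2 * lam) - ((i : ℝ) * dx) ^ (1 - 2 * lam))
          / (1 - 2 * lam) := by
      rw [intervalIntegral.integral_comp_sub_left (fun y : ℝ => y ^ (-(2 * lam)))
        ((i : ℝ) * dx + dx / 2)]
      rw [integral_rpow (Or.inr ⟨hqne, Set.notMem_uIcc_of_lt (by nlinarith) (by nlinarith)⟩)]
      rw [hq1, show (i : ℝ) * dx + dx / 2 - dx / 2 = (i : ℝ) * dx from by ring,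
        show (i : ℝ) * dx + dx / 2 - -(dx / 2) = ((i : ℝ) + 1) * dx from by ring]
    rw [e1, e2, habs]
    rw [Real.mul_rpow (by linarith : (0:ℝ) ≤ (i : ℝ)) hdx.le,
      Real.mul_rpow (by linarith : (0:ℝ) ≤ (i : ℝ) - 1) hdx.le,
      Real.mul_rpow (by linarith : (0:ℝ) ≤ (i : ℝ) + 1) hdx.le]
    field_simp
    ring
  · -- negative case : i ≤ -2
    have hi2 : (2 : ℝ) ≤ -(i : ℝ) := by
      have h0 : (2 : ℤ) ≤ -i := by rwa [abs_of_neg hneg] at hi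
      have h' : (2 : ℝ) ≤ ((-i : ℤ) : ℝ) := by exact_mod_cast h0
      push_cast at h'
      linarith
    have habs : |(i : ℝ)| = -(i : ℝ) := abs_of_nonpos (by linarith)
    have hidx : (i : ℝ) * dx ≤ -2 * dx := by nlinarith
    have hfun : Set.EqOn
        (fun x => ∫ z in {z : ℝ | dx / 2 < |z|},
          ((cell1 dx i).indicator (fun _ => (1 : ℝ)) x
            - (cell1 dx i).indicator (fun _ => (1 : ℝ)) (x + z)) ∂(fracMeasure1 lam dl))
        (fun x => -(dl / (2 * lam) * ((x - ((i : ℝ) * dx + dx / 2)) ^ (-(2 * lam))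
          - (x - ((i : ℝ) * dx - dx / 2)) ^ (-(2 * lam)))))
        (Set.Ico (-(dx / 2)) (dx / 2)) := by
      intro x hx
      obtain ⟨hx1, hx2⟩ := hx
      beta_reduce
      have hcpos : 0 < x - ((i : ℝ) * dx + dx / 2) := by linarith
      have hcd : x - ((i : ℝ) * dx + dx / 2) ≤ x - ((i : ℝ) * dx - dx / 2) := by linarith
      rw [inner_val lam dl dx hdl.le i x
          (fun z hz => by
            have h2 := hz.2
            simp only [Set.mem_setOf_eq]
            rw [abs_of_neg (by linarith)]
            linarith)
          (by
            simp only [cell1, Set.mem_Ico, not_and, not_lt]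
            intro h; linarith)
          (intgOn dl lam _ _ (fun y hy => by
            have := hy.2; intro h0; rw [h0] at this; linarith))]
      rw [show Set.Ico ((i : ℝ) * dx - dx / 2 - x) ((i : ℝ) * dx + dx / 2 - x)
          = Set.Ico (-(x - ((i : ℝ) * dx - dx / 2))) (-(x - ((i : ℝ) * dx + dx / 2))) from by
        rw [show (i : ℝ) * dx - dx / 2 - x = -(x - ((i : ℝ) * dx - dx / 2)) from by ring,
          show (i : ℝ) * dx + dx / 2 - x = -(x - ((i : ℝ) * dx + dx / 2)) from by ring]]
      rw [absIntNeg dl lam _ _ hl0 hcpos hcd]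
    rw [setIntegral_congr_fun measurableSet_Ico hfun]
    rw [Measure.restrict_congr_set Ico_ae_eq_Ioc,
      ← intervalIntegral.integral_of_le (by linarith : -(dx / 2) ≤ dx / 2)]
    have hcont1 : IntervalIntegrable
        (fun x : ℝ => (x - ((i : ℝ) * dx + dx / 2)) ^ (-(2 * lam))) volume (-(dx / 2)) (dx / 2) := by
      apply ContinuousOn.intervalIntegrable
      apply ContinuousOn.rpow_const (by fun_prop)
      intro x hx
      rw [Set.uIcc_of_le (by linarith : -(dx / 2) ≤ dx / 2)] at hx
      exact Or.inl (by nlinarith [hx.1])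
    have hcont2 : IntervalIntegrable
        (fun x : ℝ => (x - ((i : ℝ) * dx - dx / 2)) ^ (-(2 * lam))) volume (-(dx / 2)) (dx / 2) := by
      apply ContinuousOn.intervalIntegrable
      apply ContinuousOn.rpow_const (by fun_prop)
      intro x hx
      rw [Set.uIcc_of_le (by linarith : -(dx / 2) ≤ dx / 2)] at hx
      exact Or.inl (by nlinarith [hx.1])
    rw [intervalIntegral.integral_neg, intervalIntegral.integral_const_mul,
      intervalIntegral.integral_sub hcont1 hcont2]
    have e1 : (∫ x in (-(dx / 2))..(dx / 2), (x - ((i : ℝ) * dx + dx / 2)) ^ (-(2 * lam)))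
        = (((-(i : ℝ)) * dx) ^ (1 - 2 * lam) - ((-(i : ℝ) - 1) * dx) ^ (1 - 2 * lam))
          / (1 - 2 * lam) := by
      rw [intervalIntegral.integral_comp_sub_right (fun y : ℝ => y ^ (-(2 * lam)))
        ((i : ℝ) * dx + dx / 2)]
      rw [show -(dx / 2) - ((i : ℝ) * dx + dx / 2) = (-(i : ℝ) - 1) * dx from by ring,
        show dx / 2 - ((i : ℝ) * dx + dx / 2) = (-(i : ℝ)) * dx from by ring]
      rw [integral_rpow (Or.inr ⟨hqne, Set.notMem_uIcc_of_lt (by nlinarith) (by nlinarith)⟩)]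
      rw [hq1]
    have e2 : (∫ x in (-(dx / 2))..(dx / 2), (x - ((i : ℝ) * dx - dx / 2)) ^ (-(2 * lam)))
        = (((-(i : ℝ) + 1) * dx) ^ (1 - 2 * lam) - ((-(i : ℝ)) * dx) ^ (1 - 2 * lam))
          / (1 - 2 * lam) := by
      rw [intervalIntegral.integral_comp_sub_right (fun y : ℝ => y ^ (-(2 * lam)))
        ((i : ℝ) * dx - dx / 2)]
      rw [show -(dx / 2) - ((i : ℝ) * dx - dx / 2) = (-(i : ℝ)) * dx from by ring,
        show dx / 2 - ((i : ℝ) * dx - dx / 2) = (-(i : ℝ) + 1) * dx from by ring]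
      rw [integral_rpow (Or.inr ⟨hqne, Set.notMem_uIcc_of_lt (by nlinarith) (by nlinarith)⟩)]
      rw [hq1]
    rw [e1, e2, habs]
    rw [Real.mul_rpow (by linarith : (0:ℝ) ≤ -(i : ℝ)) hdx.le,
      Real.mul_rpow (by linarith : (0:ℝ) ≤ -(i : ℝ) - 1) hdx.le,
      Real.mul_rpow (by linarith : (0:ℝ) ≤ -(i : ℝ) + 1) hdx.le]
    field_simp
    ring
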